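/- Let M be a symmetric positive semidefinite operator on a finite-dimensional Hilbert space with distinct eigenvalues μ₁ > μ₂ > ⋯ ≥ 0 and spectral projectors P_r, where the top eigenvalue μ₁ is simple with unit eigenvector u₁ and spectral gap ḡ₁ = μ₁ − μ₂ > 0. Let M̂ be another symmetric operator with leading unit eigenvector û₁ (sign chosen so ⟨û₁, u₁⟩ ≥ 0), let P₁ = u₁⊗u₁, P̂₁ = û₁⊗û₁, C₁ = ∑_{s≠1} (μ₁ − μ_s)⁻¹ P_s, and L₁ = C₁(M̂ − M)P₁ + P₁(M̂ − M)C₁. Then the remainder S₁ := P̂₁ − P₁ − L₁ satisfies ‖S₁‖ ≤ 14 (‖M̂ − M‖ / ḡ₁)². -/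

import Mathlib

open scoped RealInnerProductSpace BigOperators

/-- The rank-one operator `x ↦ ⟨v, x⟩ u`. -/
noncomputable def rankOneOp {E : Type*} [NormedAddCommGroup E] [InnerProductSpace ℝ E]
    (u v : E) : E →L[ℝ] E :=
  (innerSL ℝ v).smulRight u

section aux
variable {E : Type*} [NormedAddCommGroup E] [InnerProductSpace ℝ E]

lemma rankOneOp_apply (u v x : E) : rankOneOp u v x = ⟪v, x⟫ • u := rfl

lemma rankOneOp_add_left (u u' v : E) :
    rankOneOp (u + u') v = rankOneOp u v + rankOneOp u' v := by
  ext x; simp [rankOneOp_apply, smul_add]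

lemma rankOneOp_add_right (u v v' : E) :
    rankOneOp u (v + v') = rankOneOp u v + rankOneOp u v' := by
  ext x; simp [rankOneOp_apply, inner_add_left, add_smul]

lemma rankOneOp_smul_left (r : ℝ) (u v : E) :
    rankOneOp (r • u) v = r • rankOneOp u v := by
  ext x; simp [rankOneOp_apply, smul_smul, mul_comm r]

lemma rankOneOp_smul_right (r : ℝ) (u v : E) :
    rankOneOp u (r • v) = r • rankOneOp u v := by
  ext x; simp [rankOneOp_apply, real_inner_smul_left, mul_smul]

lemma rankOneOp_sub_left (u u' v : E) :
    rankOneOp (u - u') v = rankOneOp u v - rankOneOp u' v := by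
  ext x; simp [rankOneOp_apply, smul_sub]

lemma rankOneOp_sub_right (u v v' : E) :
    rankOneOp u (v - v') = rankOneOp u v - rankOneOp u v' := by
  ext x; simp [rankOneOp_apply, inner_sub_left, sub_smul]
lemma bessel2 (u v x : E) (hu : ‖u‖ = 1) (hvu : ⟪v, u⟫ = 0) :
    ⟪v, x⟫ ^ 2 + ‖v‖ ^ 2 * ⟪u, x⟫ ^ 2 ≤ ‖v‖ ^ 2 * ‖x‖ ^ 2 := by
  have h1 : ⟪v, x⟫ = ⟪v, x - ⟪u, x⟫ • u⟫ := by
    rw [inner_sub_right, inner_smul_right, hvu]; ring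
  have h2 : |⟪v, x - ⟪u, x⟫ • u⟫| ≤ ‖v‖ * ‖x - ⟪u, x⟫ • u‖ := abs_real_inner_le_norm _ _
  have h3 : ‖x - ⟪u, x⟫ • u‖ ^ 2 = ‖x‖ ^ 2 - ⟪u, x⟫ ^ 2 := by
    rw [← real_inner_self_eq_norm_sq, ← real_inner_self_eq_norm_sq]
    simp only [inner_sub_left, inner_sub_right, inner_smul_left, inner_smul_right,
      real_inner_self_eq_norm_sq, hu, real_inner_comm u x]
    ring
  have h4 : ⟪v, x⟫ ^ 2 ≤ ‖v‖ ^ 2 * (‖x‖ ^ 2 - ⟪u, x⟫ ^ 2) := by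
    rw [h1, ← h3]
    calc ⟪v, x - ⟪u, x⟫ • u⟫ ^ 2 = |⟪v, x - ⟪u, x⟫ • u⟫| ^ 2 := (sq_abs _).symm
      _ ≤ (‖v‖ * ‖x - ⟪u, x⟫ • u‖) ^ 2 := by
          apply pow_le_pow_left₀ (abs_nonneg _) h2
      _ = ‖v‖ ^ 2 * ‖x - ⟪u, x⟫ • u‖ ^ 2 := by ring
  nlinarith
lemma sqrt_ineq {a b : ℝ} (ha : 0 ≤ a) (hb : 0 ≤ b) (h : a ^ 2 ≤ b ^ 2) : a ≤ b := by
  nlinarith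

lemma normA (u v : E) (hu : ‖u‖ = 1) (hvu : ⟪v, u⟫ = 0) :
    ‖rankOneOp v v - ‖v‖ ^ 2 • rankOneOp u u‖ ≤ ‖v‖ ^ 2 := by
  refine ContinuousLinearMap.opNorm_le_bound _ (by positivity) fun x => ?_
  have hx : (rankOneOp v v - ‖v‖ ^ 2 • rankOneOp u u) x
      = ⟪v, x⟫ • v - (‖v‖ ^ 2 * ⟪u, x⟫) • u := by
    simp [rankOneOp_apply, smul_smul]
  rw [hx]
  refine sqrt_ineq (norm_nonneg _) (by positivity) ?_
  have expand : ‖⟪v, x⟫ • v - (‖v‖ ^ 2 * ⟪u, x⟫) • u‖ ^ 2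
      = ⟪v, x⟫ ^ 2 * ‖v‖ ^ 2 + (‖v‖ ^ 2 * ⟪u, x⟫) ^ 2 := by
    rw [← real_inner_self_eq_norm_sq]
    have huv : ⟪u, v⟫ = 0 := by rw [real_inner_comm]; exact hvu
    simp only [inner_sub_left, inner_sub_right, inner_smul_left, inner_smul_right,
      real_inner_self_eq_norm_sq, hu, hvu, huv, conj_trivial]
    ring
  rw [expand]
  have := bessel2 u v x hu hvu
  nlinarith [sq_nonneg (‖v‖^2), norm_nonneg v, sq_nonneg ⟪u,x⟫, sq_nonneg ⟪v,x⟫]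

lemma normB (u v : E) (hu : ‖u‖ = 1) (hvu : ⟪v, u⟫ = 0) :
    ‖rankOneOp v u + rankOneOp u v‖ ≤ ‖v‖ := by
  refine ContinuousLinearMap.opNorm_le_bound _ (norm_nonneg _) fun x => ?_
  have hx : (rankOneOp v u + rankOneOp u v) x = ⟪u, x⟫ • v + ⟪v, x⟫ • u := by
    simp [rankOneOp_apply]
  rw [hx]
  refine sqrt_ineq (norm_nonneg _) (by positivity) ?_
  have expand : ‖⟪u, x⟫ • v + ⟪v, x⟫ • u‖ ^ 2
      = ⟪u, x⟫ ^ 2 * ‖v‖ ^ 2 + ⟪v, x⟫ ^ 2 := by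
    rw [← real_inner_self_eq_norm_sq]
    have huv : ⟪u, v⟫ = 0 := by rw [real_inner_comm]; exact hvu
    simp only [inner_add_left, inner_add_right, inner_smul_left, inner_smul_right,
      real_inner_self_eq_norm_sq, hu, hvu, huv, conj_trivial]
    ring
  rw [expand]
  have := bessel2 u v x hu hvu
  nlinarith

lemma pyth {ι : Type*} (s : Finset ι) (f : ι → E)
    (h : ∀ i ∈ s, ∀ j ∈ s, i ≠ j → ⟪f i, f j⟫ = 0) :
    ‖∑ i ∈ s, f i‖ ^ 2 = ∑ i ∈ s, ‖f i‖ ^ 2 := by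
  rw [← real_inner_self_eq_norm_sq, sum_inner]
  refine Finset.sum_congr rfl fun i hi => ?_
  rw [inner_sum, Finset.sum_eq_single_of_mem i hi]
  · exact real_inner_self_eq_norm_sq _
  · intro j hj hji
    exact h i hi j hj (Ne.symm hji) ▸ (h i hi j hj hji.symm ▸ h i hi j hj hji.symm)


end aux

set_option maxHeartbeats 1000000 in
/-- Koltchinskii–Lounici perturbation bound: the remainder
`S₁ = P̂₁ − P₁ − L₁` in the first-order expansion of the leading spectral projector
satisfies `‖S₁‖ ≤ 14 (‖M̂ − M‖/ḡ₁)²`. -/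
theorem stmt_7 {m N : ℕ} (hN : 2 ≤ N)
    (M Mhat : EuclideanSpace ℝ (Fin m) →L[ℝ] EuclideanSpace ℝ (Fin m))
    (μs : Fin N → ℝ) (hdec : StrictAnti μs) (hnonneg : ∀ i, 0 ≤ μs i)
    (P : Fin N → (EuclideanSpace ℝ (Fin m) →L[ℝ] EuclideanSpace ℝ (Fin m)))
    (hPsymm : ∀ i x y, ⟪P i x, y⟫ = ⟪x, P i y⟫)
    (hPidem : ∀ i, (P i).comp (P i) = P i)
    (hPorth : ∀ i j, i ≠ j → (P i).comp (P j) = 0)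
    (hPsum : ∑ i, P i = ContinuousLinearMap.id ℝ (EuclideanSpace ℝ (Fin m)))
    (hM : M = ∑ i, μs i • P i)
    (u1 uhat1 : EuclideanSpace ℝ (Fin m))
    (hu1 : ‖u1‖ = 1) (huhat1 : ‖uhat1‖ = 1)
    (hP0 : P ⟨0, by omega⟩ = rankOneOp u1 u1)
    (hMhatsymm : ∀ x y, ⟪Mhat x, y⟫ = ⟪x, Mhat y⟫)
    (hlead : Mhat uhat1 = ⟪Mhat uhat1, uhat1⟫ • uhat1)
    (htop : ∀ x, ‖x‖ = 1 → ⟪Mhat x, x⟫ ≤ ⟪Mhat uhat1, uhat1⟫)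
    (hsign : 0 ≤ ⟪uhat1, u1⟫)
    (g : ℝ) (hg : g = μs ⟨0, by omega⟩ - μs ⟨1, by omega⟩)
    (hclose : ‖Mhat - M‖ < g / 2)
    (C1 L1 : EuclideanSpace ℝ (Fin m) →L[ℝ] EuclideanSpace ℝ (Fin m))
    (hC1 : C1 = ∑ i ∈ Finset.univ.erase ⟨0, by omega⟩,
      (μs ⟨0, by omega⟩ - μs i)⁻¹ • P i)
    (hL1 : L1 = C1.comp ((Mhat - M).comp (P ⟨0, by omega⟩))
      + (P ⟨0, by omega⟩).comp ((Mhat - M).comp C1)) :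
    ‖rankOneOp uhat1 uhat1 - P ⟨0, by omega⟩ - L1‖ ≤ 14 * (‖Mhat - M‖ / g) ^ 2 := by
    classical
  have h0N : 0 < N := by omega
  have h1N : 1 < N := by omega
  set i0 : Fin N := ⟨0, h0N⟩ with hi0def
  set i1 : Fin N := ⟨1, h1N⟩ with hi1def
  set Δ : EuclideanSpace ℝ (Fin m) →L[ℝ] EuclideanSpace ℝ (Fin m) := Mhat - M with hΔ
  set ε : ℝ := ‖Δ‖ with hε
  show ‖rankOneOp uhat1 uhat1 - P i0 - L1‖ ≤ 14 * (ε / g) ^ 2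
  have hP0' : P i0 = rankOneOp u1 u1 := hP0
  clear_value i0 i1
  have hg' : g = μs i0 - μs i1 := hg
  have hC1' : C1 = ∑ i ∈ Finset.univ.erase i0, (μs i0 - μs i)⁻¹ • P i := hC1
  have hεnn : 0 ≤ ε := hε ▸ norm_nonneg Δ
  have hΔle : ∀ x, ‖Δ x‖ ≤ ε * ‖x‖ := fun x => hε ▸ Δ.le_opNorm x
  clear_value ε
  have hgε : ε < g / 2 := hclose
  have hgpos : 0 < g := by linarith
  have hgε2 : 0 < g - ε := by linarith
  -- basic operator facts
  have hPapp : ∀ i j, i ≠ j → ∀ x, P i (P j x) = 0 := by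
    intro i j h x
    have := congrArg (fun T => T x) (hPorth i j h)
    simpa using this
  have hPP : ∀ i x, P i (P i x) = P i x := by
    intro i x
    have := congrArg (fun T => T x) (hPidem i)
    simpa using this
  have hdecomp : ∀ x, ∑ i, P i x = x := by
    intro x
    have := congrArg (fun T => T x) hPsum
    simpa using this
  have hMsymm : ∀ x y, ⟪M x, y⟫ = ⟪x, M y⟫ := by
    intro x y
    rw [hM]
    simp only [ContinuousLinearMap.sum_apply, ContinuousLinearMap.smul_apply,
      sum_inner, inner_sum, real_inner_smul_left, real_inner_smul_right]
    exact Finset.sum_congr rfl fun i _ => by rw [hPsymm]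
  have hΔsymm : ∀ x y, ⟪Δ x, y⟫ = ⟪x, Δ y⟫ := by
    intro x y
    rw [hΔ]
    simp only [ContinuousLinearMap.sub_apply, inner_sub_left, inner_sub_right,
      hMhatsymm x y, hMsymm x y]
  have hPinner : ∀ i x, ⟪P i x, x⟫ = ‖P i x‖ ^ 2 := by
    intro i x
    calc ⟪P i x, x⟫ = ⟪x, P i x⟫ := real_inner_comm _ _
      _ = ⟪x, P i (P i x)⟫ := by rw [hPP]
      _ = ⟪P i x, P i x⟫ := (hPsymm i x (P i x)).symm
      _ = ‖P i x‖ ^ 2 := real_inner_self_eq_norm_sq _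
  have hPorthx : ∀ (x : EuclideanSpace ℝ (Fin m)) (i j : Fin N), i ≠ j →
      ⟪P i x, P j x⟫ = 0 := by
    intro x i j hij
    rw [hPsymm, hPapp i j hij, inner_zero_right]
  have hpythx : ∀ x : EuclideanSpace ℝ (Fin m), ∑ i, ‖P i x‖ ^ 2 = ‖x‖ ^ 2 := by
    intro x
    have := pyth Finset.univ (fun i => P i x) (fun i _ j _ hij => hPorthx x i j hij)
    rw [hdecomp x] at this
    exact this.symm
  -- action on u1
  have hP0u : P i0 u1 = u1 := by
    rw [hP0', rankOneOp_apply, real_inner_self_eq_norm_sq, hu1]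
    simp
  have hPsu1 : ∀ s, s ≠ i0 → P s u1 = 0 := by
    intro s hs
    rw [← hP0u]
    exact hPapp s i0 hs u1
  have hMu1 : M u1 = μs i0 • u1 := by
    have h1 : M u1 = ∑ i, μs i • P i u1 := by
      rw [hM]; simp
    rw [h1, Finset.sum_eq_single i0]
    · rw [hP0u]
    · intro j _ hj; rw [hPsu1 j hj, smul_zero]
    · intro h; exact absurd (Finset.mem_univ i0) h
  have hPM : ∀ s x, P s (M x) = μs s • P s x := by
    intro s x
    have h1 : M x = ∑ i, μs i • P i x := by rw [hM]; simp
    rw [h1, map_sum, Finset.sum_eq_single s]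
    · rw [map_smul, hPP]
    · intro j _ hj
      rw [map_smul, hPapp s j (Ne.symm hj), smul_zero]
    · intro h; exact absurd (Finset.mem_univ s) h
  -- eigenvalue estimates
  set μh : ℝ := ⟪Mhat uhat1, uhat1⟫ with hμh
  clear_value μh
  have hinner_abs : ∀ x y : EuclideanSpace ℝ (Fin m), |⟪Δ x, y⟫| ≤ ε * (‖x‖ * ‖y‖) := by
    intro x y
    calc |⟪Δ x, y⟫| ≤ ‖Δ x‖ * ‖y‖ := abs_real_inner_le_norm _ _
      _ ≤ (ε * ‖x‖) * ‖y‖ := by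
          apply mul_le_mul_of_nonneg_right (hΔle x) (norm_nonneg _)
      _ = ε * (‖x‖ * ‖y‖) := by ring
  have hμh_lower : μs i0 - ε ≤ μh := by
    have h1 := htop u1 hu1
    have h2 : ⟪Mhat u1, u1⟫ = μs i0 + ⟪Δ u1, u1⟫ := by
      have hsplit : Mhat u1 = M u1 + Δ u1 := by rw [hΔ]; simp
      rw [hsplit, inner_add_left, hMu1, real_inner_smul_left, real_inner_self_eq_norm_sq,
        hu1]
      ring
    have h3 : |⟪Δ u1, u1⟫| ≤ ε := by simpa [hu1] using hinner_abs u1 u1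
    have h4 := (abs_le.mp h3).1
    rw [h2] at h1
    linarith
  have hMquad : ∀ x : EuclideanSpace ℝ (Fin m), ‖x‖ = 1 → ⟪M x, x⟫ ≤ μs i0 := by
    intro x hx
    have h1 : ⟪M x, x⟫ = ∑ i, μs i * ‖P i x‖ ^ 2 := by
      rw [hM]
      simp only [ContinuousLinearMap.sum_apply, ContinuousLinearMap.smul_apply, sum_inner,
        real_inner_smul_left]
      exact Finset.sum_congr rfl fun i _ => by rw [hPinner]
    rw [h1]
    calc ∑ i, μs i * ‖P i x‖ ^ 2 ≤ ∑ i, μs i0 * ‖P i x‖ ^ 2 := by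
          apply Finset.sum_le_sum
          intro i _
          have hle : μs i ≤ μs i0 := hdec.antitone (by simp [hi0def, Fin.le_def])
          nlinarith [sq_nonneg ‖P i x‖]
      _ = μs i0 * ∑ i, ‖P i x‖ ^ 2 := by rw [Finset.mul_sum]
      _ = μs i0 := by rw [hpythx x, hx]; ring
  have hμh_upper : μh ≤ μs i0 + ε := by
    have h2 : μh = ⟪M uhat1, uhat1⟫ + ⟪Δ uhat1, uhat1⟫ := by
      have hsplit : Mhat uhat1 = M uhat1 + Δ uhat1 := by rw [hΔ]; simp
      rw [hμh, hsplit, inner_add_left]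
    have h3 : |⟪Δ uhat1, uhat1⟫| ≤ ε := by simpa [huhat1] using hinner_abs uhat1 uhat1
    have h4 := (abs_le.mp h3).2
    have h5 := hMquad uhat1 huhat1
    linarith
  have habsμ : |μs i0 - μh| ≤ ε := abs_le.mpr ⟨by linarith, by linarith⟩
  -- gaps
  have hgap : ∀ s, s ≠ i0 → μs s ≤ μs i1 := by
    intro s hs
    apply hdec.antitone
    have hval : s.val ≠ 0 := fun h => hs (by rw [hi0def]; exact Fin.ext h)
    simp only [hi1def, Fin.le_def, Fin.val_mk]
    omega
  have hμhgap : ∀ s, s ≠ i0 → g - ε ≤ μh - μs s := by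
    intro s hs
    have := hgap s hs
    rw [hg']
    linarith
  have hμgap : ∀ s, s ≠ i0 → g ≤ μs i0 - μs s := by
    intro s hs
    have := hgap s hs
    rw [hg']
    linarith
  have hμhpos : ∀ s, s ≠ i0 → 0 < μh - μs s := fun s hs =>
    lt_of_lt_of_le hgε2 (hμhgap s hs)
  -- resolvent identity
  have hres : ∀ s, s ≠ i0 → (μh - μs s) • P s uhat1 = P s (Δ uhat1) := by
    intro s hs
    have h1 : P s (Mhat uhat1) = μh • P s uhat1 := by rw [hlead, map_smul]
    have h2 : Mhat uhat1 = M uhat1 + Δ uhat1 := by rw [hΔ]; simp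
    rw [h2, map_add, hPM] at h1
    rw [sub_smul, ← h1]
    abel
  have hresolve : ∀ s, s ≠ i0 → P s uhat1 = (μh - μs s)⁻¹ • P s (Δ uhat1) := by
    intro s hs
    rw [← hres s hs, smul_smul, inv_mul_cancel₀ (hμhpos s hs).ne', one_smul]
  -- c, vh
  set c : ℝ := ⟪uhat1, u1⟫ with hc
  set vh : EuclideanSpace ℝ (Fin m) := uhat1 - c • u1 with hvh
  clear_value c vh
  have hu1u : ⟪u1, uhat1⟫ = c := by rw [hc, real_inner_comm]
  have hvhu : ⟪vh, u1⟫ = 0 := by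
    rw [hvh, inner_sub_left, real_inner_smul_left, real_inner_self_eq_norm_sq, hu1]
    rw [hc]; ring
  have hvhsq : ‖vh‖ ^ 2 = 1 - c ^ 2 := by
    rw [← real_inner_self_eq_norm_sq, hvh]
    simp only [inner_sub_left, inner_sub_right, real_inner_smul_left, real_inner_smul_right,
      real_inner_self_eq_norm_sq, hu1, huhat1, hu1u, norm_smul, Real.norm_eq_abs,
      mul_one, sq_abs]
    rw [← hc]; ring
  have hPi0_uhat : P i0 uhat1 = c • u1 := by
    rw [hP0', rankOneOp_apply, hu1u]
  have hPi0vh : P i0 vh = 0 := by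
    rw [hvh, map_sub, map_smul, hPi0_uhat, hP0u, sub_self]
  have hPsvh : ∀ s, s ≠ i0 → P s vh = P s uhat1 := by
    intro s hs
    rw [hvh, map_sub, map_smul, hPsu1 s hs, smul_zero, sub_zero]
  -- representation of vectors killed by P i0
  have hrep : ∀ q : EuclideanSpace ℝ (Fin m), P i0 q = 0 →
      q = ∑ s ∈ Finset.univ.erase i0, P s q := by
    intro q h0
    conv_lhs => rw [← hdecomp q]
    rw [← Finset.add_sum_erase _ _ (Finset.mem_univ i0), h0, zero_add]
  -- generic bound for sums over the complement
  have hsumbound : ∀ (y : EuclideanSpace ℝ (Fin m)) (α : Fin N → ℝ) (b : ℝ), 0 ≤ b →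
      (∀ s, s ≠ i0 → |α s| ≤ b) →
      ‖∑ s ∈ Finset.univ.erase i0, α s • P s y‖ ≤ b * ‖y‖ := by
    intro y α b hb hα
    refine sqrt_ineq (norm_nonneg _) (by positivity) ?_
    rw [pyth _ _ ?orth]
    case orth =>
      intro i _ j _ hij
      rw [real_inner_smul_left, real_inner_smul_right, hPorthx y i j hij]
      ring
    have hterm : ∀ s ∈ Finset.univ.erase i0, ‖α s • P s y‖ ^ 2 ≤ b ^ 2 * ‖P s y‖ ^ 2 := by
      intro s hs
      have hs' : s ≠ i0 := Finset.ne_of_mem_erase hs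
      have h1 := hα s hs'
      have h2 : |α s| ^ 2 ≤ b ^ 2 := by nlinarith [abs_nonneg (α s)]
      rw [norm_smul, Real.norm_eq_abs, mul_pow]
      exact mul_le_mul_of_nonneg_right h2 (sq_nonneg _)
    calc ∑ s ∈ Finset.univ.erase i0, ‖α s • P s y‖ ^ 2
        ≤ ∑ s ∈ Finset.univ.erase i0, b ^ 2 * ‖P s y‖ ^ 2 := Finset.sum_le_sum hterm
      _ = b ^ 2 * ∑ s ∈ Finset.univ.erase i0, ‖P s y‖ ^ 2 := by rw [Finset.mul_sum]
      _ ≤ b ^ 2 * ∑ s, ‖P s y‖ ^ 2 := by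
          apply mul_le_mul_of_nonneg_left _ (sq_nonneg b)
          apply Finset.sum_le_sum_of_subset_of_nonneg (Finset.subset_univ _)
          intros; positivity
      _ = b ^ 2 * ‖y‖ ^ 2 := by rw [hpythx]
      _ = (b * ‖y‖) ^ 2 := by ring
  -- bound on ‖vh‖
  have hvhrep : vh = ∑ s ∈ Finset.univ.erase i0, (μh - μs s)⁻¹ • P s (Δ uhat1) := by
    rw [hrep vh hPi0vh]
    refine Finset.sum_congr rfl fun s hs => ?_
    have hs' : s ≠ i0 := Finset.ne_of_mem_erase hs
    rw [hPsvh s hs', hresolve s hs']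
  have hinvbound : ∀ s, s ≠ i0 → |(μh - μs s)⁻¹| ≤ (g - ε)⁻¹ := by
    intro s hs
    rw [abs_of_pos (inv_pos.mpr (hμhpos s hs))]
    exact inv_anti₀ hgε2 (hμhgap s hs)
  have hΔuhat : ‖Δ uhat1‖ ≤ ε := by simpa [huhat1] using hΔle uhat1
  have hvh_le : ‖vh‖ ≤ (g - ε)⁻¹ * ε := by
    rw [hvhrep]
    calc ‖∑ s ∈ Finset.univ.erase i0, (μh - μs s)⁻¹ • P s (Δ uhat1)‖
        ≤ (g - ε)⁻¹ * ‖Δ uhat1‖ :=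
          hsumbound _ _ _ (by positivity) hinvbound
      _ ≤ (g - ε)⁻¹ * ε := by
          apply mul_le_mul_of_nonneg_left hΔuhat (by positivity)
  -- C1 facts
  have hC1app : ∀ y, C1 y = ∑ s ∈ Finset.univ.erase i0, (μs i0 - μs s)⁻¹ • P s y := by
    intro y; rw [hC1']; simp
  have hPsC1 : ∀ s, s ≠ i0 → ∀ y, P s (C1 y) = (μs i0 - μs s)⁻¹ • P s y := by
    intro s hs y
    rw [hC1app, map_sum, Finset.sum_eq_single s]
    · rw [map_smul, hPP]
    · intro j hj hjs
      rw [map_smul, hPapp s j (Ne.symm hjs), smul_zero]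
    · intro h
      exact absurd (Finset.mem_erase.mpr ⟨hs, Finset.mem_univ s⟩) h
  have hPi0C1 : ∀ y, P i0 (C1 y) = 0 := by
    intro y
    rw [hC1app, map_sum, Finset.sum_eq_zero]
    intro j hj
    rw [map_smul, hPapp i0 j (Ne.symm (Finset.ne_of_mem_erase hj)), smul_zero]
  have hC1symm : ∀ x y, ⟪C1 x, y⟫ = ⟪x, C1 y⟫ := by
    intro x y
    rw [hC1app, hC1app, sum_inner, inner_sum]
    refine Finset.sum_congr rfl fun s _ => ?_
    rw [real_inner_smul_left, real_inner_smul_right, hPsymm]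
  have hC1u1 : C1 u1 = 0 := by
    rw [hC1app, Finset.sum_eq_zero]
    intro j hj
    rw [hPsu1 j (Finset.ne_of_mem_erase hj), smul_zero]
  set w : EuclideanSpace ℝ (Fin m) := C1 (Δ u1) with hw
  set z : EuclideanSpace ℝ (Fin m) := c • vh - w with hz
  clear_value w z
  have hwu : ⟪w, u1⟫ = 0 := by
    rw [hw, hC1symm, hC1u1, inner_zero_right]
  have hzu : ⟪z, u1⟫ = 0 := by
    rw [hz, inner_sub_left, real_inner_smul_left, hvhu, hwu]
    ring
  -- L1 as rank-one sum
  have hL1' : L1 = rankOneOp w u1 + rankOneOp u1 w := by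
    have hL1'' : L1 = C1.comp (Δ.comp (P i0)) + (P i0).comp (Δ.comp C1) := hL1
    rw [hL1'']
    ext x
    have lhs1 : C1 (Δ (P i0 x)) = ⟪u1, x⟫ • w := by
      rw [hP0', rankOneOp_apply, map_smul, map_smul, hw]
    have lhs2 : P i0 (Δ (C1 x)) = ⟪w, x⟫ • u1 := by
      rw [hP0', rankOneOp_apply]
      congr 1
      rw [← hΔsymm, ← hC1symm, hw]
    simp only [ContinuousLinearMap.add_apply, ContinuousLinearMap.comp_apply,
      rankOneOp_apply, lhs1, lhs2]
  -- z components
  set d : EuclideanSpace ℝ (Fin m) := c • uhat1 - u1 with hd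
  clear_value d
  have hdsq : ‖d‖ ^ 2 = 1 - c ^ 2 := by
    rw [← real_inner_self_eq_norm_sq, hd]
    simp only [inner_sub_left, inner_sub_right, real_inner_smul_left, real_inner_smul_right,
      real_inner_self_eq_norm_sq, hu1, huhat1, hu1u, norm_smul, Real.norm_eq_abs,
      mul_one, sq_abs]
    rw [← hc]; ring
  have hzrep : z = (∑ s ∈ Finset.univ.erase i0, (μh - μs s)⁻¹ • P s (Δ d))
      + ∑ s ∈ Finset.univ.erase i0,
          ((μh - μs s)⁻¹ - (μs i0 - μs s)⁻¹) • P s (Δ u1) := by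
    have hPi0z : P i0 z = 0 := by
      rw [hz, map_sub, map_smul, hPi0vh, smul_zero, hw, hPi0C1, sub_self]
    rw [hrep z hPi0z, ← Finset.sum_add_distrib]
    refine Finset.sum_congr rfl fun s hs => ?_
    have hs' : s ≠ i0 := Finset.ne_of_mem_erase hs
    rw [hz, map_sub, map_smul, hPsvh s hs', hresolve s hs', hw, hPsC1 s hs', hd,
      map_sub, map_smul, map_sub, map_smul]
    module
  have hδbound : ∀ s, s ≠ i0 →
      |(μh - μs s)⁻¹ - (μs i0 - μs s)⁻¹| ≤ ε * ((g - ε) * g)⁻¹ := by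
    intro s hs
    have hA : 0 < μh - μs s := hμhpos s hs
    have hB : 0 < μs i0 - μs s := lt_of_lt_of_le hgpos (hμgap s hs)
    have heq : (μh - μs s)⁻¹ - (μs i0 - μs s)⁻¹
        = (μs i0 - μh) / ((μh - μs s) * (μs i0 - μs s)) := by
      field_simp
      ring
    rw [heq, abs_div, abs_of_pos (by positivity : (0:ℝ) < (μh - μs s) * (μs i0 - μs s))]
    rw [div_le_iff₀ (by positivity)]
    have h1 : (g - ε) * g ≤ (μh - μs s) * (μs i0 - μs s) := by
      apply mul_le_mul (hμhgap s hs) (hμgap s hs) (le_of_lt hgpos) (by linarith [hμhpos s hs])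
    have h2 : 0 < (g - ε) * g := by positivity
    calc |μs i0 - μh| ≤ ε := habsμ
      _ = ε * ((g - ε) * g)⁻¹ * ((g - ε) * g) := by field_simp
      _ ≤ ε * ((g - ε) * g)⁻¹ * ((μh - μs s) * (μs i0 - μs s)) := by
          apply mul_le_mul_of_nonneg_left h1 (by positivity)
  have hΔu1 : ‖Δ u1‖ ≤ ε := by simpa [hu1] using hΔle u1
  have hd_le : ‖d‖ ≤ (g - ε)⁻¹ * ε := by
    refine sqrt_ineq (norm_nonneg _) (by positivity) ?_
    rw [hdsq, ← hvhsq]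
    nlinarith [hvh_le, norm_nonneg vh]
  have hz_le : ‖z‖ ≤ (g - ε)⁻¹ * (ε * ((g - ε)⁻¹ * ε)) + ε * ((g - ε) * g)⁻¹ * ε := by
    rw [hzrep]
    have hza : ‖∑ s ∈ Finset.univ.erase i0, (μh - μs s)⁻¹ • P s (Δ d)‖
        ≤ (g - ε)⁻¹ * (ε * ((g - ε)⁻¹ * ε)) := by
      calc ‖∑ s ∈ Finset.univ.erase i0, (μh - μs s)⁻¹ • P s (Δ d)‖
          ≤ (g - ε)⁻¹ * ‖Δ d‖ := hsumbound _ _ _ (by positivity) hinvbound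
        _ ≤ (g - ε)⁻¹ * (ε * ((g - ε)⁻¹ * ε)) := by
            apply mul_le_mul_of_nonneg_left _ (by positivity)
            calc ‖Δ d‖ ≤ ε * ‖d‖ := hΔle d
              _ ≤ ε * ((g - ε)⁻¹ * ε) := mul_le_mul_of_nonneg_left hd_le hεnn
    have hzb : ‖∑ s ∈ Finset.univ.erase i0,
        ((μh - μs s)⁻¹ - (μs i0 - μs s)⁻¹) • P s (Δ u1)‖ ≤ ε * ((g - ε) * g)⁻¹ * ε := by
      calc ‖∑ s ∈ Finset.univ.erase i0, ((μh - μs s)⁻¹ - (μs i0 - μs s)⁻¹) • P s (Δ u1)‖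
          ≤ ε * ((g - ε) * g)⁻¹ * ‖Δ u1‖ := hsumbound _ _ _ (by positivity) hδbound
        _ ≤ ε * ((g - ε) * g)⁻¹ * ε := mul_le_mul_of_nonneg_left hΔu1 (by positivity)
    calc ‖_ + _‖ ≤ _ := norm_add_le _ _
      _ ≤ _ := add_le_add hza hzb
  -- the decomposition of the remainder
  have hSdecomp : rankOneOp uhat1 uhat1 - P i0 - L1
      = (rankOneOp vh vh - ‖vh‖ ^ 2 • rankOneOp u1 u1)
        + (rankOneOp z u1 + rankOneOp u1 z) := by
    have huexp : uhat1 = c • u1 + vh := by rw [hvh]; abel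
    rw [hL1', hP0', hvhsq, hz]
    nth_rewrite 1 [huexp]
    nth_rewrite 1 [huexp]
    simp only [rankOneOp_add_left, rankOneOp_add_right, rankOneOp_smul_left,
      rankOneOp_smul_right, rankOneOp_sub_left, rankOneOp_sub_right, smul_sub, sub_smul,
      smul_smul, one_smul, smul_add]
    module
  rw [hSdecomp]
  have hA := normA u1 vh hu1 hvhu
  have hB := normB u1 z hu1 hzu
  have htotal : ‖(rankOneOp vh vh - ‖vh‖ ^ 2 • rankOneOp u1 u1)
      + (rankOneOp z u1 + rankOneOp u1 z)‖ ≤ ‖vh‖ ^ 2 + ‖z‖ :=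
    le_trans (norm_add_le _ _) (add_le_add hA hB)
  have hinv2 : (g - ε)⁻¹ ≤ 2 / g := by
    rw [inv_le_comm₀ hgε2 (by positivity), inv_div]
    linarith
  have hvh2 : ‖vh‖ ^ 2 ≤ 4 * (ε / g) ^ 2 := by
    have h1 : ‖vh‖ ≤ 2 / g * ε := le_trans hvh_le (by
      apply mul_le_mul_of_nonneg_right hinv2 hεnn)
    calc ‖vh‖ ^ 2 ≤ (2 / g * ε) ^ 2 := pow_le_pow_left₀ (norm_nonneg vh) h1 2
      _ = 4 * (ε / g) ^ 2 := by ring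
  have hz2 : ‖z‖ ≤ 6 * (ε / g) ^ 2 := by
    have h1 : (g - ε)⁻¹ * (ε * ((g - ε)⁻¹ * ε)) ≤ 4 * (ε / g) ^ 2 := by
      have := hinv2
      have h2g : 0 < 2 / g := by positivity
      have hinvnn : 0 ≤ (g - ε)⁻¹ := by positivity
      calc (g - ε)⁻¹ * (ε * ((g - ε)⁻¹ * ε)) = ((g - ε)⁻¹ * ε) * ((g - ε)⁻¹ * ε) := by ring
        _ ≤ (2 / g * ε) * (2 / g * ε) := by
            apply mul_le_mul _ _ (by positivity) (by positivity)
            · exact mul_le_mul_of_nonneg_right hinv2 hεnn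
            · exact mul_le_mul_of_nonneg_right hinv2 hεnn
        _ = 4 * (ε / g) ^ 2 := by field_simp; ring
    have h2 : ε * ((g - ε) * g)⁻¹ * ε ≤ 2 * (ε / g) ^ 2 := by
      have h3 : ((g - ε) * g)⁻¹ = (g - ε)⁻¹ * g⁻¹ := by
        rw [mul_inv]
      rw [h3]
      calc ε * ((g - ε)⁻¹ * g⁻¹) * ε ≤ ε * (2 / g * g⁻¹) * ε := by
            apply mul_le_mul_of_nonneg_right _ hεnn
            apply mul_le_mul_of_nonneg_left _ hεnn
            apply mul_le_mul_of_nonneg_right hinv2 (by positivity)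
        _ = 2 * (ε / g) ^ 2 := by field_simp
    linarith [hz_le]
  calc ‖(rankOneOp vh vh - ‖vh‖ ^ 2 • rankOneOp u1 u1)
      + (rankOneOp z u1 + rankOneOp u1 z)‖ ≤ ‖vh‖ ^ 2 + ‖z‖ := htotal
    _ ≤ 4 * (ε / g) ^ 2 + 6 * (ε / g) ^ 2 := add_le_add hvh2 hz2
    _ ≤ 14 * (ε / g) ^ 2 := by linarith [sq_nonneg (ε / g)]
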